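/- arXiv:1809.06986 — 4 statements merged into one kernel-verified Lean document; each statement's English description precedes it below -/
import Mathlib

section
/- Let A be an m×n distance matrix, x = argmin_i A_{i,1}, d₀ = max_j A_{x,j}, and d_max = max_{j,j'} max_i |A_{i,j} − A_{i,j'}|. If d₀ ≥ 8 d_max, then for every row index i and every column j, d'/3 ≤ A_{i,j} ≤ (8/3) d', where d' = max_j A_{i,j}; i.e., all entries of the i-th row are within a factor 8 of each other. -/
open Finset

/-- For a distance matrix `A`, with `x = argmin_i A i 0`, `d₀ = max_j A x j`,
`d_max = max_{j,j'} max_i |A i j - A i j'|`: if `d₀ ≥ 8 d_max` then for every row `i` and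
column `j`, `d'/3 ≤ A i j ≤ (8/3) d'`, where `d' = max_j A i j`. -/
theorem stmt3 {X : Type*} [MetricSpace X] (m n : ℕ) (hm : 0 < m) (hn : 0 < n)
    (p : Fin m → X) (q : Fin n → X)
    (A : Matrix (Fin m) (Fin n) ℝ) (hA : ∀ i j, A i j = dist (p i) (q j))
    (x : Fin m) (hx : ∀ i : Fin m, A x ⟨0, hn⟩ ≤ A i ⟨0, hn⟩)
    (d₀ dmax : ℝ)
    (hd₀ : d₀ = Finset.univ.sup' (Finset.univ_nonempty_iff.mpr ⟨⟨0, hn⟩⟩) (fun j => A x j))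
    (hdmax : dmax = Finset.univ.sup' (Finset.univ_nonempty_iff.mpr ⟨⟨0, hn⟩⟩) fun j =>
      Finset.univ.sup' (Finset.univ_nonempty_iff.mpr ⟨⟨0, hn⟩⟩) fun j' =>
        Finset.univ.sup' (Finset.univ_nonempty_iff.mpr ⟨⟨0, hm⟩⟩) fun i => |A i j - A i j'|)
    (h : 8 * dmax ≤ d₀) :
    ∀ (i : Fin m) (j : Fin n),
      (Finset.univ.sup' (Finset.univ_nonempty_iff.mpr ⟨⟨0, hn⟩⟩) (fun j' => A i j')) / 3
        ≤ A i j ∧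
      A i j ≤ (8 / 3) *
        Finset.univ.sup' (Finset.univ_nonempty_iff.mpr ⟨⟨0, hn⟩⟩) (fun j' => A i j') := by
  intro i j
  have hne : (Finset.univ : Finset (Fin n)).Nonempty := Finset.univ_nonempty_iff.mpr ⟨⟨0, hn⟩⟩
  -- pairwise bound
  have hB : ∀ (i' : Fin m) (a b : Fin n), |A i' a - A i' b| ≤ dmax := by
    intro i' a b
    rw [hdmax]
    calc |A i' a - A i' b| ≤ Finset.univ.sup' (Finset.univ_nonempty_iff.mpr ⟨⟨0, hm⟩⟩)
          (fun i => |A i a - A i b|) := Finset.le_sup' (fun i => |A i a - A i b|) (Finset.mem_univ i')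
      _ ≤ Finset.univ.sup' (Finset.univ_nonempty_iff.mpr ⟨⟨0, hn⟩⟩) (fun j' =>
          Finset.univ.sup' (Finset.univ_nonempty_iff.mpr ⟨⟨0, hm⟩⟩) fun i => |A i a - A i j'|) :=
        Finset.le_sup' (fun j' => Finset.univ.sup' (Finset.univ_nonempty_iff.mpr ⟨⟨0, hm⟩⟩)
          fun i => |A i a - A i j'|) (Finset.mem_univ b)
      _ ≤ _ := Finset.le_sup' (fun a => Finset.univ.sup' (Finset.univ_nonempty_iff.mpr ⟨⟨0, hn⟩⟩)
          fun j' => Finset.univ.sup' (Finset.univ_nonempty_iff.mpr ⟨⟨0, hm⟩⟩)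
          fun i => |A i a - A i j'|) (Finset.mem_univ a)
  have hdmax0 : 0 ≤ dmax := le_trans (abs_nonneg _) (hB x ⟨0, hn⟩ ⟨0, hn⟩)
  set d' := Finset.univ.sup' (Finset.univ_nonempty_iff.mpr ⟨⟨0, hn⟩⟩) (fun j' => A i j') with hd'
  -- d₀ ≤ A x 0 + dmax
  obtain ⟨j₀, _, hj₀⟩ := Finset.exists_mem_eq_sup' (Finset.univ_nonempty_iff.mpr ⟨⟨0, hn⟩⟩) (fun j => A x j)
  have h1 : d₀ ≤ A x ⟨0, hn⟩ + dmax := by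
    have := hB x j₀ ⟨0, hn⟩
    have habs := abs_sub_le_iff.mp this
    rw [hd₀, hj₀]
    linarith [habs.1]
  have h2 : A i ⟨0, hn⟩ ≤ d' := Finset.le_sup' _ (Finset.mem_univ _)
  have h3 : 7 * dmax ≤ d' := by linarith [hx i]
  have hd'0 : 0 ≤ d' := by linarith
  obtain ⟨j₁, _, hj₁⟩ := Finset.exists_mem_eq_sup' (Finset.univ_nonempty_iff.mpr ⟨⟨0, hn⟩⟩) (fun j' => A i j')
  have h4 : d' - dmax ≤ A i j := by
    have h6 := (abs_sub_le_iff.mp (hB i j₁ j)).1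
    have hd1 : d' = A i j₁ := hj₁
    linarith
  have h5 : A i j ≤ d' := Finset.le_sup' _ (Finset.mem_univ _)
  constructor <;> linarith
end

section
/- Let A be an m×n real matrix and let q = (q_1,…,q_n) be a probability distribution on columns with q_j ≥ (b/m)·‖A_{*,j}‖₂²/‖A‖_F² for all j with A_{*,j} ≠ 0. Form C ∈ ℝ^{m×t} by sampling t columns i.i.d. from q and setting each sampled column to A_{*,j}/√(t q_j). Then E[C Cᵀ] = A Aᵀ, and for each sample i, the random matrix X_i = (1/t)((1/q_j) A_{*,j} A_{*,j}ᵀ − A Aᵀ) satisfies ‖X_i‖₂ ≤ (2m)/(t b)·‖A‖_F². -/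
open Finset Matrix

/-- Operator (spectral) norm of a real matrix. -/
noncomputable def opNorm {m n : ℕ} (M : Matrix (Fin m) (Fin n) ℝ) : ℝ :=
  ‖LinearMap.toContinuousLinearMap (Matrix.toEuclideanLin M)‖

lemma opNorm_smul' {m n : ℕ} (c : ℝ) (M : Matrix (Fin m) (Fin n) ℝ) :
    opNorm (c • M) = |c| * opNorm M := by
  unfold opNorm
  rw [_root_.map_smul, _root_.map_smul]
  rw [norm_smul c (LinearMap.toContinuousLinearMap (toEuclideanLin M)), Real.norm_eq_abs]

lemma opNorm_sub_le' {m n : ℕ} (M N : Matrix (Fin m) (Fin n) ℝ) :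
    opNorm (M - N) ≤ opNorm M + opNorm N := by
  unfold opNorm
  rw [map_sub, map_sub]
  exact norm_sub_le _ _

lemma opNorm_sum_le' {m n : ℕ} {ι : Type*} (s : Finset ι) (M : ι → Matrix (Fin m) (Fin n) ℝ) :
    opNorm (∑ i ∈ s, M i) ≤ ∑ i ∈ s, opNorm (M i) := by
  unfold opNorm
  rw [map_sum, map_sum]
  exact norm_sum_le _ _

lemma opNorm_vecMulVec_le' {m : ℕ} (v : Fin m → ℝ) :
    opNorm (vecMulVec v v) ≤ ∑ i, v i ^ 2 := by
  unfold opNorm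
  apply ContinuousLinearMap.opNorm_le_bound _ (by positivity)
  intro x
  rw [LinearMap.coe_toContinuousLinearMap']
  rw [Matrix.toEuclideanLin_apply]
  set v' : EuclideanSpace ℝ (Fin m) := (WithLp.equiv 2 (Fin m → ℝ)).symm v with hv'def
  have hmv : (vecMulVec v v) *ᵥ ((WithLp.equiv 2 (Fin m → ℝ)) x) =
      (v ⬝ᵥ (WithLp.equiv 2 (Fin m → ℝ)) x) • v := by
    ext i
    simp [vecMulVec, mulVec, dotProduct, Finset.mul_sum, mul_comm, mul_left_comm]
    exact Finset.sum_congr rfl fun _ _ => mul_assoc _ _ _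
  have hgoal : WithLp.toLp 2 (vecMulVec v v *ᵥ x.ofLp) =
      (WithLp.equiv 2 (Fin m → ℝ)).symm ((v ⬝ᵥ (WithLp.equiv 2 (Fin m → ℝ)) x) • v) :=
    congrArg (WithLp.equiv 2 (Fin m → ℝ)).symm hmv
  rw [hgoal]
  have h1 : ((WithLp.equiv 2 (Fin m → ℝ)).symm ((v ⬝ᵥ (WithLp.equiv 2 (Fin m → ℝ)) x) • v)) =
      (v ⬝ᵥ (WithLp.equiv 2 (Fin m → ℝ)) x) • v' := rfl
  rw [h1, norm_smul]
  have hvsq : ‖v'‖ ^ 2 = ∑ i, v i ^ 2 := by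
    rw [EuclideanSpace.norm_eq, Real.sq_sqrt (by positivity)]
    simp [hv'def, Real.norm_eq_abs, sq_abs, PiLp.toLp_apply]
  have hd : v ⬝ᵥ (WithLp.equiv 2 (Fin m → ℝ)) x = inner ℝ v' x := by
    simp [PiLp.inner_apply, RCLike.inner_apply, dotProduct, hv'def,
      PiLp.toLp_apply, WithLp.equiv_apply]
    exact Finset.sum_congr rfl fun _ _ => mul_comm _ _
  rw [hd, Real.norm_eq_abs]
  calc |inner ℝ v' x| * ‖v'‖ ≤ (‖v'‖ * ‖x‖) * ‖v'‖ := by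
        apply mul_le_mul_of_nonneg_right (abs_real_inner_le_norm v' x) (norm_nonneg _)
    _ = ‖v'‖ ^ 2 * ‖x‖ := by ring
    _ = (∑ i, v i ^ 2) * ‖x‖ := by rw [hvsq]

lemma expect_single' {ι κ : Type*} [Fintype ι] [DecidableEq ι] [Fintype κ] [DecidableEq κ]
    (q : κ → ℝ) (hq1 : ∑ j, q j = 1) (s : ι) (h : κ → ℝ) :
    ∑ f : ι → κ, (∏ s', q (f s')) * h (f s) = ∑ j, q j * h j := by
  rw [← Equiv.sum_comp (Equiv.piSplitAt s (fun _ => κ)).symm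
    (fun f => (∏ s', q (f s')) * h (f s))]
  rw [Fintype.sum_prod_type]
  have key : ∀ (x : κ) (g : ∀ j : {j : ι // j ≠ s}, κ),
      (∏ s', q ((Equiv.piSplitAt s (fun _ => κ)).symm (x, g) s')) *
        h ((Equiv.piSplitAt s (fun _ => κ)).symm (x, g) s) =
      (q x * h x) * ∏ a : {j : ι // j ≠ s}, q (g a) := by
    intro x g
    have hs : (Equiv.piSplitAt s (fun _ => κ)).symm (x, g) s = x := by
      simp [Equiv.piSplitAt_symm_apply]
    rw [hs, Fintype.prod_eq_mul_prod_compl s]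
    rw [hs]
    have hsub : ∏ i ∈ ({s}ᶜ : Finset ι), q ((Equiv.piSplitAt s (fun _ => κ)).symm (x, g) i)
        = ∏ a : {j : ι // j ≠ s}, q ((Equiv.piSplitAt s (fun _ => κ)).symm (x, g) a) := by
      apply Finset.prod_subtype
      intro i; simp
    rw [hsub]
    have hga : ∀ a : {j : ι // j ≠ s},
        q ((Equiv.piSplitAt s (fun _ => κ)).symm (x, g) a) = q (g a) := by
      intro a
      simp [Equiv.piSplitAt_symm_apply, a.2]
    rw [Finset.prod_congr rfl (fun a _ => hga a)]
    ring
  simp only [key]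
  rw [← Finset.sum_mul_sum]
  have hg : ∑ g : {j : ι // j ≠ s} → κ, ∏ a : {j : ι // j ≠ s}, q (g a) = 1 := by
    rw [← Fintype.piFinset_univ, ← Finset.prod_univ_sum]
    simp [hq1]
  rw [hg, mul_one]


/-- Column sampling with probabilities `q j ≥ (b/m)‖A_{*,j}‖²/‖A‖_F²`:
`E[C Cᵀ] = A Aᵀ` (the expectation taken over i.i.d. samples `f : Fin t → Fin n` with
weight `∏ s, q (f s)`, where `C f` has columns `A_{*,f s}/√(t q (f s))`), and each centered
sample matrix `X = (1/t)((1/q_j) A_{*,j} A_{*,j}ᵀ − A Aᵀ)` has operator norm at most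
`(2m/(t b))·‖A‖_F²`. -/
theorem stmt7 (m n t b : ℕ) (hm : 0 < m) (hn : 0 < n) (ht : 0 < t) (hb : 0 < b)
    (hbm : b ≤ m)
    (A : Matrix (Fin m) (Fin n) ℝ)
    (q : Fin n → ℝ) (hq0 : ∀ j, 0 ≤ q j) (hq1 : ∑ j, q j = 1)
    (hq : ∀ j, (fun i => A i j) ≠ 0 →
      ((b : ℝ) / m) * (∑ i, (A i j) ^ 2) / (∑ i, ∑ j', (A i j') ^ 2) ≤ q j)
    (C : (Fin t → Fin n) → Matrix (Fin m) (Fin t) ℝ)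
    (hC : ∀ f : Fin t → Fin n, C f =
      Matrix.of fun i s => A i (f s) / Real.sqrt (t * q (f s))) :
    (∑ f : Fin t → Fin n, (∏ s, q (f s)) • (C f * (C f)ᵀ) = A * Aᵀ) ∧
    (∀ j : Fin n, 0 < q j →
      opNorm ((1 / (t : ℝ)) •
          ((1 / q j) • Matrix.vecMulVec (fun i => A i j) (fun i => A i j) - A * Aᵀ))
        ≤ (2 * m) / (t * b) * ∑ i, ∑ j', (A i j') ^ 2) := by
  have hF0 : (0:ℝ) ≤ ∑ i, ∑ j', (A i j') ^ 2 := by positivity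
  have hcolF : ∀ j : Fin n, (∑ i, (A i j) ^ 2) ≤ ∑ i, ∑ j', (A i j') ^ 2 := by
    intro j
    rw [Finset.sum_comm]
    exact Finset.single_le_sum (f := fun j' => ∑ i, (A i j') ^ 2)
      (fun j' _ => by positivity) (Finset.mem_univ j)
  have hmp : (0:ℝ) < m := by exact_mod_cast hm
  have hbp : (0:ℝ) < b := by exact_mod_cast hb
  have htp : (0:ℝ) < t := by exact_mod_cast ht
  have hqzero : ∀ j : Fin n, q j = 0 → ∀ i, A i j = 0 := by
    intro j hj i
    by_contra hne
    have hcol : (fun i => A i j) ≠ 0 := fun h0 => hne (congrFun h0 i)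
    have hS : 0 < ∑ i, (A i j) ^ 2 :=
      Finset.sum_pos' (fun i _ => by positivity) ⟨i, Finset.mem_univ i, by positivity⟩
    have hFpos : (0:ℝ) < ∑ i, ∑ j', (A i j') ^ 2 := lt_of_lt_of_le hS (hcolF j)
    have h := hq j hcol
    rw [hj] at h
    nlinarith [div_pos (mul_pos (div_pos hbp hmp) hS) hFpos]
  constructor
  · -- expectation
    ext i k
    rw [Matrix.sum_apply]
    have step1 : ∀ f : Fin t → Fin n,
        ((∏ s, q (f s)) • (C f * (C f)ᵀ)) i k
          = (∏ s, q (f s)) * ∑ s, A i (f s) * A k (f s) / (t * q (f s)) := by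
      intro f
      rw [Matrix.smul_apply, smul_eq_mul, Matrix.mul_apply]
      congr 1
      apply Finset.sum_congr rfl
      intro s _
      rw [hC f]
      have hnn : (0:ℝ) ≤ t * q (f s) := mul_nonneg htp.le (hq0 _)
      simp only [Matrix.transpose_apply, Matrix.of_apply]
      rw [div_mul_div_comm, Real.mul_self_sqrt hnn]
    simp only [step1]
    have step2 : ∑ f : Fin t → Fin n,
        (∏ s, q (f s)) * ∑ s, A i (f s) * A k (f s) / (t * q (f s))
        = ∑ s : Fin t, ∑ f : Fin t → Fin n,
            (∏ s', q (f s')) * (A i (f s) * A k (f s) / (t * q (f s))) := by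
      rw [Finset.sum_comm]
      exact Finset.sum_congr rfl fun f _ => Finset.mul_sum _ _ _
    rw [step2]
    have step3 : ∀ s : Fin t, ∑ f : Fin t → Fin n,
        (∏ s', q (f s')) * (A i (f s) * A k (f s) / (t * q (f s)))
        = ∑ j, q j * (A i j * A k j / (t * q j)) :=
      fun s => expect_single' q hq1 s (fun j => A i j * A k j / (t * q j))
    simp only [step3]
    have step4 : ∑ j, q j * (A i j * A k j / (t * q j)) = ∑ j, A i j * A k j / t := by
      apply Finset.sum_congr rfl
      intro j _
      rcases eq_or_ne (q j) 0 with h0 | h0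
      · rw [h0]
        rw [hqzero j h0 i]
        ring
      · field_simp
    rw [step4, Finset.sum_const, Finset.card_univ, Fintype.card_fin, nsmul_eq_mul,
      Finset.mul_sum, Matrix.mul_apply]
    refine Finset.sum_congr rfl fun j _ => ?_
    rw [Matrix.transpose_apply]
    field_simp
  · intro j hqj
    have hVle : opNorm (vecMulVec (fun i => A i j) (fun i => A i j)) ≤ ∑ i, (A i j) ^ 2 :=
      opNorm_vecMulVec_le' _
    have hmb1 : (1:ℝ) ≤ (m:ℝ) / b := (one_le_div hbp).mpr (by exact_mod_cast hbm)
    have hSle : (1 / q j) * (∑ i, (A i j) ^ 2)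
        ≤ ((m:ℝ) / b) * ∑ i, ∑ j', (A i j') ^ 2 := by
      rcases eq_or_ne (fun i => A i j) 0 with hcol | hcol
      · have hS0 : ∑ i, (A i j) ^ 2 = 0 := by
          apply Finset.sum_eq_zero
          intro i _
          rw [congrFun hcol i]
          simp
        rw [hS0, mul_zero]
        positivity
      · have hS : 0 < ∑ i, (A i j) ^ 2 := by
          obtain ⟨i, hi⟩ := Function.ne_iff.mp hcol
          have hi' : A i j ≠ 0 := hi
          exact Finset.sum_pos' (fun i _ => by positivity) ⟨i, Finset.mem_univ i, by positivity⟩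
        have hFpos : (0:ℝ) < ∑ i, ∑ j', (A i j') ^ 2 := lt_of_lt_of_le hS (hcolF j)
        have h := hq j hcol
        rw [div_le_iff₀ hFpos, div_mul_eq_mul_div, div_le_iff₀ hmp] at h
        rw [one_div, inv_mul_eq_div, div_mul_eq_mul_div, div_le_div_iff₀ hqj hbp]
        nlinarith [h]
    have hAAT : A * Aᵀ = ∑ j' : Fin n, vecMulVec (fun i => A i j') (fun i => A i j') := by
      ext i k
      simp [Matrix.mul_apply, Matrix.sum_apply, vecMulVec]
    have hAATnorm : opNorm (A * Aᵀ) ≤ ∑ i, ∑ j', (A i j') ^ 2 := by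
      rw [hAAT]
      refine le_trans (opNorm_sum_le' _ _) ?_
      calc ∑ j' : Fin n, opNorm (vecMulVec (fun i => A i j') (fun i => A i j'))
          ≤ ∑ j' : Fin n, ∑ i, (A i j') ^ 2 :=
            Finset.sum_le_sum fun j' _ => opNorm_vecMulVec_le' _
        _ = ∑ i, ∑ j', (A i j') ^ 2 := Finset.sum_comm
    have h1 : opNorm ((1 / q j) • vecMulVec (fun i => A i j) (fun i => A i j))
        ≤ ((m:ℝ) / b) * ∑ i, ∑ j', (A i j') ^ 2 := by
      rw [opNorm_smul', abs_of_pos (by positivity : (0:ℝ) < 1 / q j)]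
      refine le_trans ?_ hSle
      exact mul_le_mul_of_nonneg_left hVle (by positivity)
    have h2 : opNorm (A * Aᵀ) ≤ ((m:ℝ) / b) * ∑ i, ∑ j', (A i j') ^ 2 :=
      le_trans hAATnorm (le_mul_of_one_le_left hF0 hmb1)
    have hstep : opNorm ((1 / q j) • vecMulVec (fun i => A i j) (fun i => A i j) - A * Aᵀ)
        ≤ ((m:ℝ) / b) * (∑ i, ∑ j', (A i j') ^ 2)
          + ((m:ℝ) / b) * (∑ i, ∑ j', (A i j') ^ 2) :=
      le_trans (opNorm_sub_le' _ _) (add_le_add h1 h2)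
    rw [opNorm_smul', abs_of_pos (by positivity : (0:ℝ) < 1 / (t:ℝ))]
    calc (1 / (t:ℝ)) *
          opNorm ((1 / q j) • vecMulVec (fun i => A i j) (fun i => A i j) - A * Aᵀ)
        ≤ (1 / (t:ℝ)) * (((m:ℝ) / b) * (∑ i, ∑ j', (A i j') ^ 2)
            + ((m:ℝ) / b) * (∑ i, ∑ j', (A i j') ^ 2)) :=
          mul_le_mul_of_nonneg_left hstep (by positivity)
      _ = (2 * m) / (t * b) * ∑ i, ∑ j', (A i j') ^ 2 := by
          field_simp
          ring
end

section
/- Let A ∈ ℝ^{m×n}, let ℓ be the number of singular values of A with σ_i² ≥ ‖A‖_F²/k, let P_{∖ℓ} = U_{∖ℓ}U_{∖ℓ}ᵀ be the projection onto the left singular vectors beyond the top ℓ, and let C satisfy the two-sided spectral bound C Cᵀ − (ε/k)‖A‖_F² I ⪯ A Aᵀ ⪯ C Cᵀ + (ε/k)‖A‖_F² I. Then P_{∖ℓ} C Cᵀ P_{∖ℓ} − (2ε/k)‖A‖_F² I ⪯ A_{∖ℓ} A_{∖ℓ}ᵀ ⪯ P_{∖ℓ} C Cᵀ P_{∖ℓ}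 + (2ε/k)‖A‖_F² I, where A_{∖ℓ} = P_{∖ℓ} A, using that every unit vector x in the range of P_{∖ℓ} satisfies xᵀ A Aᵀ x ≤ ‖A‖_F²/k. -/
open Matrix

/-- Squared Frobenius norm. -/
def frobSq {m n : ℕ} (M : Matrix (Fin m) (Fin n) ℝ) : ℝ := ∑ i, ∑ j, (M i j) ^ 2

lemma psd_smul {m : ℕ} {M : Matrix (Fin m) (Fin m) ℝ} (hM : M.PosSemidef) {c : ℝ}
    (hc : 0 ≤ c) : (c • M).PosSemidef := by
  refine ⟨by rw [Matrix.IsHermitian, conjTranspose_smul, hM.1.eq, star_trivial], fun x => ?_⟩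
  convert mul_nonneg hc (hM.2 x) using 1
  rw [Finsupp.mul_sum]; refine Finsupp.sum_congr (fun i _ => ?_)
  rw [Finsupp.mul_sum]; refine Finsupp.sum_congr (fun j _ => ?_)
  simp only [Matrix.smul_apply, smul_eq_mul]; ring

lemma frobSq_nonneg {m n : ℕ} (M : Matrix (Fin m) (Fin n) ℝ) : 0 ≤ frobSq M := by
  unfold frobSq; positivity

/-- Tail terms: Suppose
`C Cᵀ − (ε/k)‖A‖_F² I ⪯ A Aᵀ ⪯ C Cᵀ + (ε/k)‖A‖_F² I`, and let `U` consist of the tail left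
singular vectors of `A` (orthonormal columns, eigenvectors of `A Aᵀ` with eigenvalues
`σ_i² ≤ ‖A‖_F²/k`), `P_{∖ℓ} = U Uᵀ`, `A_{∖ℓ} = P_{∖ℓ} A`. Then
`P_{∖ℓ} C Cᵀ P_{∖ℓ} − (2ε/k)‖A‖_F² I ⪯ A_{∖ℓ} A_{∖ℓ}ᵀ ⪯ P_{∖ℓ} C Cᵀ P_{∖ℓ} + (2ε/k)‖A‖_F² I`. -/
theorem stmt10 (m n t k s : ℕ) (hk : 0 < k)
    (A : Matrix (Fin m) (Fin n) ℝ) (C : Matrix (Fin m) (Fin t) ℝ)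
    (ε : ℝ) (hε0 : 0 < ε) (hε1 : ε < 1)
    (hlow : Matrix.PosSemidef
      (A * Aᵀ + (ε / k * frobSq A) • (1 : Matrix (Fin m) (Fin m) ℝ) - C * Cᵀ))
    (hup : Matrix.PosSemidef
      (C * Cᵀ + (ε / k * frobSq A) • (1 : Matrix (Fin m) (Fin m) ℝ) - A * Aᵀ))
    (U : Matrix (Fin m) (Fin s) ℝ) (hU : Uᵀ * U = 1)
    (σ : Fin s → ℝ)
    (hsing : A * Aᵀ * U = U * Matrix.diagonal (fun i => σ i ^ 2))
    (hsmall : ∀ i, σ i ^ 2 ≤ frobSq A / k)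
    (P : Matrix (Fin m) (Fin m) ℝ) (hP : P = U * Uᵀ) :
    Matrix.PosSemidef ((P * A) * (P * A)ᵀ +
      (2 * ε / k * frobSq A) • (1 : Matrix (Fin m) (Fin m) ℝ) - P * C * Cᵀ * P) ∧
    Matrix.PosSemidef (P * C * Cᵀ * P +
      (2 * ε / k * frobSq A) • (1 : Matrix (Fin m) (Fin m) ℝ) - (P * A) * (P * A)ᵀ) := by
  set c : ℝ := ε / k * frobSq A with hc
  have hc0 : 0 ≤ c := by
    apply mul_nonneg (div_nonneg hε0.le (Nat.cast_nonneg k)) (frobSq_nonneg A)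
  have hPt : Pᵀ = P := by rw [hP, transpose_mul, transpose_transpose]
  have hPP : P * P = P := by
    rw [hP, Matrix.mul_assoc, ← Matrix.mul_assoc Uᵀ, hU, Matrix.one_mul]
  have hPH : (Pᴴ : Matrix (Fin m) (Fin m) ℝ) = P := by
    rw [conjTranspose_eq_transpose_of_trivial, hPt]
  -- 1 - P is PSD
  have hIP : Matrix.PosSemidef ((1 : Matrix (Fin m) (Fin m) ℝ) - P) := by
    have : (1 : Matrix (Fin m) (Fin m) ℝ) - P = (1 - P) * (1 - P)ᴴ := by
      rw [conjTranspose_sub, conjTranspose_one, hPH, Matrix.sub_mul, Matrix.mul_sub,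
        Matrix.mul_sub, Matrix.one_mul, Matrix.one_mul, Matrix.mul_one, hPP]
      abel
    rw [this]
    exact posSemidef_self_mul_conjTranspose _
  have hI : Matrix.PosSemidef (1 : Matrix (Fin m) (Fin m) ℝ) := Matrix.PosSemidef.one
  -- conjugations
  have hlowP := hlow.mul_mul_conjTranspose_same P
  have hupP := hup.mul_mul_conjTranspose_same P
  rw [hPH] at hlowP hupP
  have hexp : ∀ M : Matrix (Fin m) (Fin m) ℝ,
      P * (M + c • (1 : Matrix (Fin m) (Fin m) ℝ) - C * Cᵀ) * P
        = P * M * P + c • (P * P) - P * C * Cᵀ * P := by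
    intro M
    simp only [Matrix.mul_add, Matrix.add_mul, Matrix.mul_sub, Matrix.sub_mul,
      Matrix.mul_smul, Matrix.smul_mul, Matrix.mul_one, Matrix.one_mul, Matrix.mul_assoc]
  have hPA : (P * A) * (P * A)ᵀ = P * (A * Aᵀ) * P := by
    rw [transpose_mul, hPt]
    simp only [Matrix.mul_assoc]
  have key : ∀ M : Matrix (Fin m) (Fin m) ℝ,
      Matrix.PosSemidef (P * M * P + c • (P * P) - P * C * Cᵀ * P) →
      Matrix.PosSemidef (P * M * P +
        (2 * ε / k * frobSq A) • (1 : Matrix (Fin m) (Fin m) ℝ) - P * C * Cᵀ * P) := by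
    intro M h
    have h2 := (h.add (psd_smul hIP hc0)).add (psd_smul hI hc0)
    have heq : P * M * P + c • (P * P) - P * C * Cᵀ * P
        + c • ((1 : Matrix (Fin m) (Fin m) ℝ) - P) + c • (1 : Matrix (Fin m) (Fin m) ℝ)
        = P * M * P + (2 * ε / k * frobSq A) • (1 : Matrix (Fin m) (Fin m) ℝ)
          - P * C * Cᵀ * P := by
      rw [hPP, smul_sub, hc]
      have : (2 * ε / k * frobSq A) = (ε / k * frobSq A) + (ε / k * frobSq A) := by ring
      rw [this, add_smul]
      abel
    rwa [heq] at h2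
  constructor
  · rw [hPA]
    apply key
    have := hexp (A * Aᵀ)
    rw [← this]
    exact hlowP
  · -- upper side: need P*C*Cᵀ*P + 2c I - P*(A*Aᵀ)*P PSD from hupP
    rw [hPA]
    have hupP' : Matrix.PosSemidef (P * C * Cᵀ * P + c • (P * P) - P * (A * Aᵀ) * P) := by
      have : P * (C * Cᵀ + c • (1 : Matrix (Fin m) (Fin m) ℝ) - A * Aᵀ) * P
          = P * C * Cᵀ * P + c • (P * P) - P * (A * Aᵀ) * P := by
        simp only [Matrix.mul_add, Matrix.add_mul, Matrix.mul_sub, Matrix.sub_mul,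
          Matrix.mul_smul, Matrix.smul_mul, Matrix.mul_one, Matrix.one_mul, Matrix.mul_assoc]
      rw [← this]
      exact hupP
    have h2 := (hupP'.add (psd_smul hIP hc0)).add (psd_smul hI hc0)
    have heq : P * C * Cᵀ * P + c • (P * P) - P * (A * Aᵀ) * P
        + c • ((1 : Matrix (Fin m) (Fin m) ℝ) - P) + c • (1 : Matrix (Fin m) (Fin m) ℝ)
        = P * C * Cᵀ * P + (2 * ε / k * frobSq A) • (1 : Matrix (Fin m) (Fin m) ℝ)
          - P * (A * Aᵀ) * P := by
      rw [hPP, smul_sub, hc]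
      have : (2 * ε / k * frobSq A) = (ε / k * frobSq A) + (ε / k * frobSq A) := by ring
      rw [this, add_smul]
      abel
    rwa [heq] at h2
end

section
/- There exist n×n matrices A, arising as ℓ∞-distance matrices between two n-point sets, such that A has rank 2, and A is not determined by any proper subset of its entries: specifically, taking P = {e_1,…,e_n} (standard basis of ℝⁿ) and Q consisting of n−1 zero vectors and one vector q = s·e_i with s ∈ {+1,−1} and i ∈ [n], the matrix A with A_{a,b} = ‖p_a − q_b‖_∞ has all entries equal to 1 except A_{i, j*} ∈ {0, 2} (where j* indexes q), with the value 0 if s = +1 and 2 if s = −1. Consequently, any two distinct choices of (i, s) yield distance matrices differing in exactly one entry, and ‖A − A_k‖_F = 0 for all k ≥ 2. -/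
open Matrix

lemma my_rank_add_le {m n : Type*} [Fintype m] [Fintype n] [DecidableEq n]
    (A B : Matrix m n ℝ) : (A + B).rank ≤ A.rank + B.rank := by
  rw [Matrix.rank, Matrix.rank, Matrix.rank, Matrix.mulVecLin_add]
  have h : LinearMap.range (A.mulVecLin + B.mulVecLin) ≤
      LinearMap.range A.mulVecLin ⊔ LinearMap.range B.mulVecLin := by
    rintro x ⟨v, rfl⟩
    exact Submodule.add_mem_sup (LinearMap.mem_range_self _ v) (LinearMap.mem_range_self _ v)
  exact (Submodule.finrank_mono h).trans
    (Submodule.finrank_add_le_finrank_add_finrank _ _)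

lemma my_rank_outer_le_one {m n : Type*} [Fintype m] [Fintype n] [DecidableEq n]
    (u : m → ℝ) (v : n → ℝ) :
    (Matrix.of (fun a b => u a * v b) : Matrix m n ℝ).rank ≤ 1 := by
  have hfac : (Matrix.of (fun a b => u a * v b) : Matrix m n ℝ) =
      Matrix.replicateCol Unit u * Matrix.replicateRow Unit v := by
    ext a b
    simp [Matrix.mul_apply, Matrix.replicateCol, Matrix.replicateRow]
  rw [hfac]
  calc (Matrix.replicateCol Unit u * Matrix.replicateRow Unit v).rank ≤ (Matrix.replicateCol Unit u).rank :=
        Matrix.rank_mul_le_left _ _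
    _ ≤ Fintype.card Unit := Matrix.rank_le_card_width _
    _ = 1 := Fintype.card_unit

lemma entry_val (n : ℕ) (jstar i : Fin n) (s : ℝ) (hs : s = 1 ∨ s = -1)
    (P : Fin n → (Fin n → ℝ)) (hP : ∀ a, P a = Pi.single a 1)
    (Q : Fin n → (Fin n → ℝ))
    (hQ : ∀ b, Q b = if b = jstar then s • (Pi.single i 1 : Fin n → ℝ) else 0)
    (A : Matrix (Fin n) (Fin n) ℝ)
    (hA : ∀ a b, A a b = ‖P a - Q b‖) :
    ∀ a b, A a b = if a = i ∧ b = jstar then 1 - s else 1 := by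
  have habs : |s| = 1 := by rcases hs with h | h <;> simp [h]
  intro a b
  rw [hA, hP, hQ]
  by_cases hb : b = jstar
  · subst hb
    rw [if_pos rfl]
    by_cases ha : a = i
    · subst ha
      have hv : (Pi.single a 1 : Fin n → ℝ) - s • (Pi.single a 1 : Fin n → ℝ)
          = Pi.single a (1 - s) := by
        ext j
        by_cases hj : j = a <;> simp [Pi.single_apply, hj, sub_eq_iff_eq_add]
      rw [hv, if_pos ⟨rfl, rfl⟩, Pi.norm_single]
      rcases hs with h | h <;> simp [h] <;> norm_num
    · rw [if_neg (fun h => ha h.1)]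
      have h1 : ∀ j, ‖((Pi.single a 1 : Fin n → ℝ) - s • (Pi.single i 1 : Fin n → ℝ)) j‖ ≤ 1 := by
        intro j
        simp only [Pi.sub_apply, Pi.smul_apply, Pi.single_apply, smul_eq_mul]
        by_cases hj : j = a
        · subst hj; simp [ha]
        · by_cases hj' : j = i
          · subst hj'; simp [hj, habs]
          · simp [hj, hj']
      refine le_antisymm ((pi_norm_le_iff_of_nonneg (by norm_num)).2 h1) ?_
      calc (1 : ℝ) = ‖((Pi.single a 1 : Fin n → ℝ) - s • (Pi.single i 1 : Fin n → ℝ)) a‖ := by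
            simp [Pi.single_apply, ha]
        _ ≤ _ := norm_le_pi_norm _ a
  · rw [if_neg hb, if_neg (by simp [hb]), sub_zero, Pi.norm_single]
    simp

/-- The `ℓ∞` lower-bound instance. With `P = {e₁,…,e_n} ⊆ (Fin n → ℝ)`
(sup norm), `Q` consisting of `n−1` zero vectors and one vector `q = s·e_i` (at position
`j*`, with `s = ±1`), the distance matrix `A a b = ‖P a − Q b‖_∞` has all entries `1`
except `A i j* = 0` (if `s = 1`) or `2` (if `s = −1`); it has rank at most `2` (hence
`‖A − A_k‖_F = 0` for `k ≥ 2`), it differs from the all-ones matrix in exactly the single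
entry `(i, j*)`, and distinct choices of `(i, s)` give distinct matrices. -/
theorem stmt18 (n : ℕ) (hn : 2 ≤ n) (jstar : Fin n)
    (i i' : Fin n) (s s' : ℝ) (hs : s = 1 ∨ s = -1) (hs' : s' = 1 ∨ s' = -1)
    (P : Fin n → (Fin n → ℝ)) (hP : ∀ a, P a = Pi.single a 1)
    (Q Q' : Fin n → (Fin n → ℝ))
    (hQ : ∀ b, Q b = if b = jstar then s • (Pi.single i 1 : Fin n → ℝ) else 0)
    (hQ' : ∀ b, Q' b = if b = jstar then s' • (Pi.single i' 1 : Fin n → ℝ) else 0)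
    (A A' : Matrix (Fin n) (Fin n) ℝ)
    (hA : ∀ a b, A a b = ‖P a - Q b‖)
    (hA' : ∀ a b, A' a b = ‖P a - Q' b‖) :
    (A i jstar = if s = 1 then 0 else 2) ∧
    (∀ a b, (a, b) ≠ (i, jstar) → A a b = 1) ∧
    A.rank ≤ 2 ∧
    ({p : Fin n × Fin n | A p.1 p.2 ≠ 1} = {(i, jstar)}) ∧
    ((i, s) ≠ (i', s') → A ≠ A') := by
  have hval := entry_val n jstar i s hs P hP Q hQ A hA
  have hval' := entry_val n jstar i' s' hs' P hP Q' hQ' A' hA'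
  have hs0 : s ≠ 0 := by rcases hs with h | h <;> simp [h]
  refine ⟨?_, ?_, ?_, ?_, ?_⟩
  · rw [hval i jstar, if_pos ⟨rfl, rfl⟩]
    rcases hs with h | h <;> simp [h] <;> norm_num
  · intro a b hab
    rw [hval a b, if_neg]
    rintro ⟨rfl, rfl⟩
    exact hab rfl
  · have hdecomp : A = Matrix.of (fun (a b : Fin n) => (1 : ℝ) * 1) +
        Matrix.of (fun a b => (if a = i then (1 : ℝ) else 0) *
          (if b = jstar then -s else 0)) := by
      ext a b
      rw [hval a b]
      by_cases ha : a = i <;> by_cases hb : b = jstar <;>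
        simp [Matrix.add_apply, ha, hb, sub_eq_add_neg]
    calc A.rank ≤ _ + _ := hdecomp ▸ my_rank_add_le _ _
      _ ≤ 1 + 1 := add_le_add (my_rank_outer_le_one _ _) (my_rank_outer_le_one _ _)
  · ext ⟨a, b⟩
    simp only [Set.mem_setOf_eq, Set.mem_singleton_iff, Prod.mk.injEq]
    rw [hval a b]
    constructor
    · intro h
      by_contra hc
      rw [if_neg (fun ⟨h1, h2⟩ => hc ⟨h1, h2⟩)] at h
      exact h rfl
    · rintro ⟨rfl, rfl⟩
      rw [if_pos ⟨rfl, rfl⟩]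
      intro h
      exact hs0 (by linarith)
  · intro hne hAA
    apply hne
    by_cases hii : i = i'
    · subst hii
      have := congrFun (congrFun hAA i) jstar
      rw [hval i jstar, hval' i jstar, if_pos ⟨rfl, rfl⟩, if_pos ⟨rfl, rfl⟩] at this
      exact Prod.ext rfl (by linarith)
    · exfalso
      have := congrFun (congrFun hAA i) jstar
      rw [hval i jstar, hval' i jstar, if_pos ⟨rfl, rfl⟩,
        if_neg (fun h => hii h.1)] at this
      exact hs0 (by linarith)
end
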